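/- Let Γ be a player-specific congestion game on a circle. If at least one player is of type 1 or of type 1', then the transition graph TG(Γ) is acyclic, and every best response schedule terminates after at most 4n^2 steps (every sequence of best-response steps has length at most 4n^2). -/

import Mathlib

open scoped ENNReal NNReal

/-- A player-specific singleton congestion game on a circle with `n` players:
the resources are `0, …, n-1`, and player `i` chooses between resource `i`
(its 0-strategy, with delay function `d0 i`) and resource `i+1 (mod n)`
(its 1-strategy, with delay function `d1 i`). The delay functions are strictly
increasing and ties are broken (for each player the delays of its two resources
at congestions `1 ≤ k ≤ n` are pairwise distinct). -/
structure CircleGame (n : ℕ) where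
  d0 : Fin n → ℕ → ℕ
  d1 : Fin n → ℕ → ℕ
  mono0 : ∀ i, StrictMono (d0 i)
  mono1 : ∀ i, StrictMono (d1 i)
  tie : ∀ i : Fin n, ∀ k, 1 ≤ k → k ≤ n → ∀ k', 1 ≤ k' → k' ≤ n → d0 i k ≠ d1 i k'

namespace CircleGame

variable {n : ℕ} [NeZero n]

/-- A state is a function `s : Fin n → Bool`: `s i = false` iff player `i` plays its
0-strategy (resource `i`), and `s i = true` iff it plays its 1-strategy (resource `i+1`).
`cong s r` is the congestion of resource `r`: resource `r` is allocated by player `r`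
(if it plays its 0-strategy) and by player `r-1` (if it plays its 1-strategy). -/
def cong (s : Fin n → Bool) (r : Fin n) : ℕ :=
  (if s r = false then 1 else 0) + (if s (r - 1) = true then 1 else 0)

/-- The current resource of player `i` is a best response to state `s`. -/
def CurrentBR (G : CircleGame n) (s : Fin n → Bool) (i : Fin n) : Prop :=
  if s i = false then G.d0 i (cong s i) ≤ G.d1 i (cong s (i + 1) + 1)
  else G.d1 i (cong s (i + 1)) ≤ G.d0 i (cong s i + 1)

/-- One best-response step: a player whose current resource is not a best response
switches to its (unique) other resource, which is then its best response. -/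
def Step (G : CircleGame n) (s s' : Fin n → Bool) : Prop :=
  ∃ i, ¬ G.CurrentBR s i ∧ s' = Function.update s i (!(s i))

/-- Nash equilibrium: every player's current resource is a best response. -/
def IsNash (G : CircleGame n) (s : Fin n → Bool) : Prop := ∀ i, G.CurrentBR s i

/-- type 1 : `d_{r_i}(1) < d_{r_i}(2) < d_{r_{i+1}}(1) < d_{r_{i+1}}(2)`. -/
def IsType1 (G : CircleGame n) (i : Fin n) : Prop :=
  G.d0 i 1 < G.d0 i 2 ∧ G.d0 i 2 < G.d1 i 1 ∧ G.d1 i 1 < G.d1 i 2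

/-- type 1' : roles of the two resources exchanged. -/
def IsType1' (G : CircleGame n) (i : Fin n) : Prop :=
  G.d1 i 1 < G.d1 i 2 ∧ G.d1 i 2 < G.d0 i 1 ∧ G.d0 i 1 < G.d0 i 2

/-- type 2 : `d_{r_i}(1) < d_{r_{i+1}}(1) < d_{r_i}(2) < d_{r_{i+1}}(2)`. -/
def IsType2 (G : CircleGame n) (i : Fin n) : Prop :=
  G.d0 i 1 < G.d1 i 1 ∧ G.d1 i 1 < G.d0 i 2 ∧ G.d0 i 2 < G.d1 i 2

/-- type 2' : roles of the two resources exchanged. -/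
def IsType2' (G : CircleGame n) (i : Fin n) : Prop :=
  G.d1 i 1 < G.d0 i 1 ∧ G.d0 i 1 < G.d1 i 2 ∧ G.d1 i 2 < G.d0 i 2

/-- type 3 : `d_{r_i}(1) < d_{r_{i+1}}(1) < d_{r_{i+1}}(2) < d_{r_i}(2)`. -/
def IsType3 (G : CircleGame n) (i : Fin n) : Prop :=
  G.d0 i 1 < G.d1 i 1 ∧ G.d1 i 1 < G.d1 i 2 ∧ G.d1 i 2 < G.d0 i 2

/-- type 3' : roles of the two resources exchanged. -/
def IsType3' (G : CircleGame n) (i : Fin n) : Prop :=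
  G.d1 i 1 < G.d0 i 1 ∧ G.d0 i 1 < G.d0 i 2 ∧ G.d0 i 2 < G.d1 i 2

/-- Resource `r_i` is a termination point for overload tokens: the pair of types of
players `i-1` and `i` is one of `(2',2), (3,3'), (3,2), (2',3')`. -/
def OverloadTP (G : CircleGame n) (i : Fin n) : Prop :=
  (G.IsType2' (i - 1) ∧ G.IsType2 i) ∨ (G.IsType3 (i - 1) ∧ G.IsType3' i) ∨
  (G.IsType3 (i - 1) ∧ G.IsType2 i) ∨ (G.IsType2' (i - 1) ∧ G.IsType3' i)

/-- Resource `r_i` is a termination point for underload tokens: the pair of types of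
players `i-1` and `i` is one of `(2,2'), (3,3'), (2,3'), (3,2')`. -/
def UnderloadTP (G : CircleGame n) (i : Fin n) : Prop :=
  (G.IsType2 (i - 1) ∧ G.IsType2' i) ∨ (G.IsType3 (i - 1) ∧ G.IsType3' i) ∨
  (G.IsType2 (i - 1) ∧ G.IsType3' i) ∨ (G.IsType3 (i - 1) ∧ G.IsType2' i)

open scoped Classical in
/-- The set of players whose current resource is not a best response. -/
noncomputable def unsat (G : CircleGame n) (s : Fin n → Bool) : Finset (Fin n) :=
  Finset.univ.filter fun i => ¬ G.CurrentBR s i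

/-- One step of the random best response dynamics: in a state that is not a Nash
equilibrium, a player whose current resource is not a best response is selected
uniformly at random and switches to its best response; Nash equilibria are absorbing. -/
noncomputable def stepPMF (G : CircleGame n) (s : Fin n → Bool) : PMF (Fin n → Bool) :=
  if h : (G.unsat s).Nonempty then
    (PMF.uniformOfFinset (G.unsat s) h).bind fun i => PMF.pure (Function.update s i (!(s i)))
  else PMF.pure s

/-- The distribution of the random best response dynamics after `t` steps, started in `s`. -/
noncomputable def walk (G : CircleGame n) (s : Fin n → Bool) : ℕ → PMF (Fin n → Bool)
  | 0 => PMF.pure s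
  | t + 1 => (walk G s t).bind G.stepPMF

open scoped Classical in
/-- The expected number of steps until the random best response dynamics started in `s`
reaches a Nash equilibrium: since Nash equilibria are absorbing, this is
`∑_{t ≥ 0} Pr[X_t is not a Nash equilibrium]`. -/
noncomputable def expTime (G : CircleGame n) (s : Fin n → Bool) : ℝ≥0∞ :=
  ∑' t : ℕ, ∑ s' ∈ Finset.univ.filter (fun s' => ¬ G.IsNash s'), G.walk s t s'

end CircleGame


set_option linter.unusedSectionVars false


namespace CircleProof

def bi (b : Bool) : ℤ := if b then 1 else 0

lemma bi_true : bi true = 1 := rfl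
lemma bi_false : bi false = 0 := rfl

lemma bi_nonneg (b : Bool) : 0 ≤ bi b := by cases b <;> simp [bi]
lemma bi_le_one (b : Bool) : bi b ≤ 1 := by cases b <;> simp [bi]

open Fin.NatCast

variable {n : ℕ} [NeZero n] (Pf : Fin n → Bool → Bool → Bool) (i0 : Fin n)

def node (k : ℕ) : Fin n := i0 + (k : Fin n)

def isA (j : Fin n) : Prop := Pf j true false = true ∧ Pf j false true = false
def isB (j : Fin n) : Prop := Pf j false true = true ∧ Pf j true false = false

instance (j : Fin n) : Decidable (isA Pf j) := by unfold isA; infer_instance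
instance (j : Fin n) : Decidable (isB Pf j) := by unfold isB; infer_instance

def goA : ℕ → ℕ → ℕ
  | 0, _ => 0
  | f+1, k => if isA Pf (node i0 k) then 1 + goA f (k+1) else 0

def aRun (m : ℕ) : ℕ := goA Pf i0 (n - m) m

def bRun : ℕ → ℕ
  | 0 => 0
  | m+1 => if isB Pf (node i0 (m+1)) then 1 + bRun m else 0

def g (k : ℕ) : ℤ := 2 + 2 * (aRun Pf i0 (k+1) : ℤ) + 2 * (bRun Pf i0 k : ℤ)

def lIdx (n k : ℕ) : ℕ := if k = 0 then n - 1 else k - 1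

def theta (k : ℕ) : ℤ :=
  if Pf (node i0 k) false false = true then -1
  else if Pf (node i0 k) true true = false then 1 + g Pf i0 (lIdx n k) + g Pf i0 k
  else if isA Pf (node i0 k) then 1 + g Pf i0 k
  else if isB Pf (node i0 k) then 1 + g Pf i0 (lIdx n k)
  else if Pf (node i0 k) false true = true then 1
  else 1 + max (g Pf i0 (lIdx n k)) (g Pf i0 k)

def contrib (k : ℕ) (s : Fin n → Bool) : ℤ :=
  theta Pf i0 k * bi (s (node i0 k)) - g Pf i0 k * bi (s (node i0 k)) * bi (s (node i0 (k+1)))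

def Phi (s : Fin n → Bool) : ℤ := ∑ k ∈ Finset.range n, contrib Pf i0 k s

/-! ### basic run lemmas -/

lemma goA_le (f : ℕ) : ∀ k, goA Pf i0 f k ≤ f := by
  induction f with
  | zero => intro k; exact Nat.le_refl 0
  | succ f ih => intro k
                 show (if isA Pf (node i0 k) then 1 + goA Pf i0 f (k+1) else 0) ≤ f + 1
                 split
                 · have := ih (k+1); omega
                 · exact Nat.zero_le _

lemma aRun_le (m : ℕ) : aRun Pf i0 m ≤ n - m := goA_le Pf i0 _ m

lemma aRun_succ {k : ℕ} (hk : k < n) (hA : isA Pf (node i0 k)) :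
    aRun Pf i0 k = 1 + aRun Pf i0 (k+1) := by
  unfold aRun
  have : n - k = (n - (k+1)) + 1 := by omega
  rw [this]
  show (if isA Pf (node i0 k) then 1 + goA Pf i0 (n-(k+1)) (k+1) else 0) = _
  rw [if_pos hA]

lemma aRun_zero {k : ℕ} (hk : k < n) (hA : ¬ isA Pf (node i0 k)) :
    aRun Pf i0 k = 0 := by
  unfold aRun
  have : n - k = (n - (k+1)) + 1 := by omega
  rw [this]
  show (if isA Pf (node i0 k) then 1 + goA Pf i0 (n-(k+1)) (k+1) else 0) = 0
  rw [if_neg hA]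

lemma aRun_n : aRun Pf i0 n = 0 := by
  unfold aRun
  rw [Nat.sub_self]
  rfl

lemma bRun_le (m : ℕ) : bRun Pf i0 m ≤ m := by
  induction m with
  | zero => exact Nat.le_refl 0
  | succ m ih => unfold bRun; split
                 · omega
                 · exact Nat.zero_le _

lemma bRun_zero {k : ℕ} (hB : ¬ isB Pf (node i0 k)) : bRun Pf i0 k = 0 := by
  cases k with
  | zero => rfl
  | succ m =>
      show (if isB Pf (node i0 (m+1)) then 1 + bRun Pf i0 m else 0) = 0
      rw [if_neg hB]

lemma bRun_succ {k : ℕ} (hk : k ≠ 0) (hB : isB Pf (node i0 k)) :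
    bRun Pf i0 k = 1 + bRun Pf i0 (k-1) := by
  cases k with
  | zero => omega
  | succ m =>
      show (if isB Pf (node i0 (m+1)) then 1 + bRun Pf i0 m else 0) = _
      rw [if_pos hB]
      simp

lemma g_ge_two (k : ℕ) : 2 ≤ g Pf i0 k := by
  unfold g
  have h1 : (0:ℤ) ≤ (aRun Pf i0 (k+1) : ℤ) := Int.natCast_nonneg _
  have h2 : (0:ℤ) ≤ (bRun Pf i0 k : ℤ) := Int.natCast_nonneg _
  linarith

/-! ### node lemmas -/

lemma node_val (k : ℕ) : ((k : Fin n)).val = k % n := Fin.val_natCast k n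

lemma node_eq_iff {k k' : ℕ} : node (n := n) i0 k = node i0 k' ↔ k % n = k' % n := by
  unfold node
  constructor
  · intro h
    have h2 : (k : Fin n) = (k' : Fin n) := by
      exact add_left_cancel h
    have := congrArg Fin.val h2
    rwa [Fin.val_natCast, Fin.val_natCast] at this
  · intro h
    congr 1
    apply Fin.ext
    rw [Fin.val_natCast, Fin.val_natCast, h]

lemma node_inj {k k' : ℕ} (hk : k < n) (hk' : k' < n) (h : node i0 k = node i0 k') :
    k = k' := by
  have := (node_eq_iff i0).mp h
  rwa [Nat.mod_eq_of_lt hk, Nat.mod_eq_of_lt hk'] at this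

lemma node_succ (k : ℕ) : node (n := n) i0 (k+1) = node i0 k + 1 := by
  unfold node
  push_cast
  rw [add_assoc]

lemma node_k0 (j : Fin n) : node i0 ((j - i0).val) = j := by
  unfold node
  rw [Fin.cast_val_eq_self]
  rw [add_comm, sub_add_cancel]

lemma lIdx_lt (hn : 1 ≤ n) {k : ℕ} (hk : k < n) : lIdx n k < n := by
  unfold lIdx; split <;> omega

lemma node_lIdx_succ {k : ℕ} (hk : k < n) : node (n := n) i0 (lIdx n k + 1) = node i0 k := by
  rcases Nat.eq_zero_or_pos k with h0 | hpos
  · subst h0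
    unfold lIdx
    rw [if_pos rfl]
    have hn : 1 ≤ n := by omega
    have : n - 1 + 1 = n := by omega
    rw [this]
    apply (node_eq_iff i0).mpr
    simp [Nat.mod_self]
  · unfold lIdx
    rw [if_neg (by omega)]
    congr 1
    omega

/-! ### i0 is not of copy type -/

variable {Pf i0} {c : Bool}

lemma not_isA_i0 (hc : ∀ x z, Pf i0 x z = c) : ¬ isA Pf i0 := by
  rintro ⟨h1, h2⟩
  rw [hc] at h1 h2
  subst h1
  exact Bool.noConfusion h2

lemma not_isB_i0 (hc : ∀ x z, Pf i0 x z = c) : ¬ isB Pf i0 := by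
  rintro ⟨h1, h2⟩
  rw [hc] at h1 h2
  subst h1
  exact Bool.noConfusion h2

lemma isA_ne_zero (hc : ∀ x z, Pf i0 x z = c) {k : ℕ} (hk : k < n)
    (hA : isA Pf (node i0 k)) : k ≠ 0 := by
  intro h0
  subst h0
  have : node (n := n) i0 0 = i0 := by
    unfold node; simp
  rw [this] at hA
  exact not_isA_i0 hc hA

lemma isB_ne_zero (hc : ∀ x z, Pf i0 x z = c) {k : ℕ} (hk : k < n)
    (hB : isB Pf (node i0 k)) : k ≠ 0 := by
  intro h0
  subst h0
  have : node (n := n) i0 0 = i0 := by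
    unfold node; simp
  rw [this] at hB
  exact not_isB_i0 hc hB

lemma isA_not_isB {j : Fin n} (hA : isA Pf j) : ¬ isB Pf j := by
  rintro ⟨h1, h2⟩
  rw [hA.2] at h1
  exact Bool.noConfusion h1

/-! ### edge weight inequalities -/

lemma gK2 (hc : ∀ x z, Pf i0 x z = c) {k : ℕ} (hk : k < n)
    (hA : isA Pf (node i0 k)) : g Pf i0 k + 2 ≤ g Pf i0 (lIdx n k) := by
  have hk0 : k ≠ 0 := isA_ne_zero hc hk hA
  have hL : lIdx n k = k - 1 := by unfold lIdx; rw [if_neg hk0]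
  rw [hL]
  have h1 : k - 1 + 1 = k := by omega
  have haR : aRun Pf i0 k = 1 + aRun Pf i0 (k+1) := aRun_succ Pf i0 hk hA
  have hbR : bRun Pf i0 k = 0 := bRun_zero Pf i0 (isA_not_isB hA)
  unfold g
  rw [h1, haR, hbR]
  have := Int.natCast_nonneg (bRun Pf i0 (k-1))
  push_cast
  linarith

lemma isB_not_isA {j : Fin n} (hB : isB Pf j) : ¬ isA Pf j := by
  rintro ⟨h1, h2⟩
  rw [hB.1] at h2
  exact Bool.noConfusion h2

lemma gK3 (hc : ∀ x z, Pf i0 x z = c) {k : ℕ} (hk : k < n)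
    (hB : isB Pf (node i0 k)) : g Pf i0 (lIdx n k) + 2 ≤ g Pf i0 k := by
  have hk0 : k ≠ 0 := isB_ne_zero hc hk hB
  have hL : lIdx n k = k - 1 := by unfold lIdx; rw [if_neg hk0]
  rw [hL]
  have h1 : k - 1 + 1 = k := by omega
  have haR : aRun Pf i0 k = 0 := aRun_zero Pf i0 hk (isB_not_isA hB)
  have hbR : bRun Pf i0 k = 1 + bRun Pf i0 (k-1) := bRun_succ Pf i0 hk0 hB
  unfold g
  rw [h1, haR, hbR]
  have := Int.natCast_nonneg (aRun Pf i0 (k+1))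
  push_cast
  linarith

/-! ### the key per-node inequality -/

lemma key (hmx : ∀ j z, Pf j false z = true → Pf j true z = true)
    (hmz : ∀ j x, Pf j x false = true → Pf j x true = true)
    (hc : ∀ x z, Pf i0 x z = c) {k : ℕ} (hk : k < n) (x z : Bool) :
    (Pf (node i0 k) x z = true →
      theta Pf i0 k - g Pf i0 (lIdx n k) * bi x - g Pf i0 k * bi z ≤ -1) ∧
    (Pf (node i0 k) x z = false →
      1 ≤ theta Pf i0 k - g Pf i0 (lIdx n k) * bi x - g Pf i0 k * bi z) := by
  have G2l := g_ge_two Pf i0 (lIdx n k)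
  have G2 := g_ge_two Pf i0 k
  have m1 : g Pf i0 (lIdx n k) * bi x ≤ g Pf i0 (lIdx n k) :=
    mul_le_of_le_one_right (by linarith) (bi_le_one x)
  have m2 : g Pf i0 k * bi z ≤ g Pf i0 k :=
    mul_le_of_le_one_right (by linarith) (bi_le_one z)
  have m3 : 0 ≤ g Pf i0 (lIdx n k) * bi x := mul_nonneg (by linarith) (bi_nonneg x)
  have m4 : 0 ≤ g Pf i0 k * bi z := mul_nonneg (by linarith) (bi_nonneg z)
  by_cases h00 : Pf (node i0 k) false false = true
  · -- constant true
    have hall : ∀ x' z', Pf (node i0 k) x' z' = true := by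
      intro x' z'
      have h01 : Pf (node i0 k) false true = true := hmz _ _ h00
      cases z'
      · cases x'
        · exact h00
        · exact hmx _ _ h00
      · cases x'
        · exact h01
        · exact hmx _ _ h01
    rw [theta, if_pos h00]
    constructor
    · intro _; linarith
    · intro hP; rw [hall] at hP; exact absurd hP (by simp)
  · by_cases h11 : Pf (node i0 k) true true = false
    · -- constant false
      have hall : ∀ x' z', Pf (node i0 k) x' z' = false := by
        intro x' z'
        cases hxz : Pf (node i0 k) x' z'
        · rfl
        · exfalso
          have s1 : Pf (node i0 k) true z' = true := by
            cases x'
            · exact hmx _ _ hxz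
            · exact hxz
          have s2 : Pf (node i0 k) true true = true := by
            cases z'
            · exact hmz _ _ s1
            · exact s1
          rw [h11] at s2
          exact Bool.noConfusion s2
      rw [theta, if_neg h00, if_pos h11]
      constructor
      · intro hP; rw [hall] at hP; exact absurd hP (by simp)
      · intro _; linarith
    · by_cases hA : isA Pf (node i0 k)
      · -- type a : copy left neighbour
        have htab : ∀ x' z', Pf (node i0 k) x' z' = x' := by
          intro x' z'
          cases x'
          · cases hxz : Pf (node i0 k) false z'
            · rfl
            · exfalso
              have s1 : Pf (node i0 k) false true = true := by
                cases z'
                · exact hmz _ _ hxz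
                · exact hxz
              rw [hA.2] at s1
              exact Bool.noConfusion s1
          · cases z'
            · exact hA.1
            · exact hmz _ _ hA.1
        have hKK := gK2 hc hk hA
        rw [theta, if_neg h00, if_neg h11, if_pos hA]
        constructor
        · intro hP
          rw [htab] at hP
          subst hP
          simp only [bi_true] at m1 m3 ⊢
          linarith
        · intro hP
          rw [htab] at hP
          subst hP
          simp only [bi_false] at m1 m3 ⊢
          linarith
      · by_cases hB : isB Pf (node i0 k)
        · -- type b : copy right neighbour
          have htab : ∀ x' z', Pf (node i0 k) x' z' = z' := by
            intro x' z'
            cases z'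
            · cases hxz : Pf (node i0 k) x' false
              · rfl
              · exfalso
                have s1 : Pf (node i0 k) true false = true := by
                  cases x'
                  · exact hmx _ _ hxz
                  · exact hxz
                rw [hB.2] at s1
                exact Bool.noConfusion s1
            · cases x'
              · exact hB.1
              · exact hmx _ _ hB.1
          have hKK := gK3 hc hk hB
          rw [theta, if_neg h00, if_neg h11, if_neg hA, if_pos hB]
          constructor
          · intro hP
            rw [htab] at hP
            subst hP
            simp only [bi_true] at m2 m4 ⊢
            linarith
          · intro hP
            rw [htab] at hP
            subst hP
            simp only [bi_false] at m2 m4 ⊢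
            linarith
        · by_cases h01 : Pf (node i0 k) false true = true
          · -- type or
            have h10 : Pf (node i0 k) true false = true := by
              cases h10' : Pf (node i0 k) true false
              · exact absurd ⟨h01, h10'⟩ hB
              · rfl
            have h11' : Pf (node i0 k) true true = true := by
              cases hv : Pf (node i0 k) true true
              · exact absurd hv h11
              · rfl
            have htab : ∀ x' z', Pf (node i0 k) x' z' = (x' || z') := by
              intro x' z'
              cases x' <;> cases z'
              · simpa using h00
              · exact h01
              · exact h10
              · exact h11'
            rw [theta, if_neg h00, if_neg h11, if_neg hA, if_neg hB, if_pos h01]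
            constructor
            · intro hP
              rw [htab] at hP
              cases hx : x <;> cases hz : z <;> rw [hx, hz] at hP
              · exact absurd hP (by simp)
              all_goals
                simp only [hx, hz, bi_true, bi_false] at m1 m2 m3 m4 ⊢
              · linarith
              · linarith
              · linarith
            · intro hP
              rw [htab] at hP
              have hx : x = false := by cases x; rfl; simp at hP
              have hz : z = false := by cases z; rfl; rw [hx] at hP; simp at hP
              subst hx; subst hz
              simp only [bi_false]
              linarith
          · -- type and
            have h10' : Pf (node i0 k) true false = false := by
              cases hv : Pf (node i0 k) true false
              · rfl
              · exfalso
                have h01f : Pf (node i0 k) false true = false := by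
                  cases hw : Pf (node i0 k) false true
                  · rfl
                  · exact absurd hw h01
                exact hA ⟨hv, h01f⟩
            have h01f : Pf (node i0 k) false true = false := by
              cases hw : Pf (node i0 k) false true
              · rfl
              · exact absurd hw h01
            have h00' : Pf (node i0 k) false false = false := by
              cases hw : Pf (node i0 k) false false
              · rfl
              · exact absurd hw h00
            have h11' : Pf (node i0 k) true true = true := by
              cases hv : Pf (node i0 k) true true
              · exact absurd hv h11
              · rfl
            have htab : ∀ x' z', Pf (node i0 k) x' z' = (x' && z') := by
              intro x' z'
              cases x' <;> cases z'
              · simpa using h00'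
              · simpa using h01f
              · simpa using h10'
              · simpa using h11'
            rw [theta, if_neg h00, if_neg h11, if_neg hA, if_neg hB, if_neg h01]
            have hmax1 := le_max_left (g Pf i0 (lIdx n k)) (g Pf i0 k)
            have hmax2 := le_max_right (g Pf i0 (lIdx n k)) (g Pf i0 k)
            constructor
            · intro hP
              rw [htab] at hP
              have hx : x = true := by cases x; simp at hP; rfl
              have hz : z = true := by cases z; rw [hx] at hP; simp at hP; rfl
              subst hx; subst hz
              simp only [bi_true]
              rcases max_cases (g Pf i0 (lIdx n k)) (g Pf i0 k) with ⟨hm, _⟩ | ⟨hm, _⟩ <;>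
                rw [hm] <;> linarith
            · intro hP
              rw [htab] at hP
              cases hx : x <;> cases hz : z <;> rw [hx, hz] at hP
              all_goals
                simp only [hx, hz, bi_true, bi_false] at m1 m2 m3 m4 ⊢
              · linarith
              · linarith
              · linarith
              · exact absurd hP (by simp)

/-! ### every best-response flip decreases the potential -/

lemma flip_decrease (hn : 2 ≤ n)
    (hmx : ∀ j z, Pf j false z = true → Pf j true z = true)
    (hmz : ∀ j x, Pf j x false = true → Pf j x true = true)
    (hc : ∀ x z, Pf i0 x z = c) (s : Fin n → Bool) (j : Fin n)
    (hne : s j ≠ Pf j (s (j-1)) (s (j+1))) :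
    Phi Pf i0 (Function.update s j (!(s j))) + 1 ≤ Phi Pf i0 s := by
  classical
  set k0 := (j - i0).val with hk0def
  have hk0lt : k0 < n := (j - i0).isLt
  have hnodek0 : node i0 k0 = j := node_k0 i0 j
  have hLlt : lIdx n k0 < n := lIdx_lt (by omega) hk0lt
  have hLne : lIdx n k0 ≠ k0 := by unfold lIdx; split <;> omega
  have hnlg : node i0 (lIdx n k0 + 1) = j := by rw [node_lIdx_succ i0 hk0lt, hnodek0]
  have hnodeL_ne : node i0 (lIdx n k0) ≠ j := by
    intro hcon
    exact hLne (node_inj i0 hLlt hk0lt (hcon.trans hnodek0.symm))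
  have hnodeL_eq : node i0 (lIdx n k0) = j - 1 := by
    rw [eq_sub_iff_add_eq, ← node_succ, hnlg]
  have hnodek0succ : node i0 (k0+1) = j + 1 := by rw [node_succ, hnodek0]
  have h10 : (1 : Fin n) ≠ 0 := by
    intro hcon
    rw [Fin.one_eq_zero_iff] at hcon
    omega
  have hone : j + 1 ≠ j := by
    intro hcon
    apply h10
    have h2 : j + 1 = j + 0 := by rw [hcon, add_zero]
    exact add_left_cancel h2
  set s' := Function.update s j (!(s j)) with hs'
  have hupj : s' j = !(s j) := Function.update_self _ _ _
  have hup1 : s' (j+1) = s (j+1) := Function.update_of_ne hone _ _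
  have hupm : s' (j-1) = s (j-1) := by
    rw [← hnodeL_eq]
    exact Function.update_of_ne hnodeL_ne _ _
  have hDzero : ∀ x ∈ Finset.range n, x ∉ ({lIdx n k0, k0} : Finset ℕ) →
      contrib Pf i0 x s' - contrib Pf i0 x s = 0 := by
    intro x hx hnx
    simp only [Finset.mem_insert, Finset.mem_singleton] at hnx
    push_neg at hnx
    have hxn : x < n := Finset.mem_range.mp hx
    have e1 : s' (node i0 x) = s (node i0 x) := by
      apply Function.update_of_ne
      intro hcon
      exact hnx.2 (node_inj i0 hxn hk0lt (hcon.trans hnodek0.symm))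
    have e2 : s' (node i0 (x+1)) = s (node i0 (x+1)) := by
      apply Function.update_of_ne
      intro hcon
      have hmods : (x+1) % n = k0 := by
        have := (node_eq_iff i0).mp (hcon.trans hnodek0.symm)
        rwa [Nat.mod_eq_of_lt hk0lt] at this
      rcases Nat.lt_or_ge (x+1) n with hlt | hge
      · rw [Nat.mod_eq_of_lt hlt] at hmods
        apply hnx.1
        unfold lIdx
        rw [if_neg (by omega)]
        omega
      · have hxe : x + 1 = n := by omega
        rw [hxe, Nat.mod_self] at hmods
        apply hnx.1
        unfold lIdx
        rw [if_pos hmods.symm]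
        omega
    rw [contrib, contrib, e1, e2]
    ring
  have hpairsub : ({lIdx n k0, k0} : Finset ℕ) ⊆ Finset.range n := by
    intro x hx
    simp only [Finset.mem_insert, Finset.mem_singleton] at hx
    rcases hx with h | h <;> (subst h; exact Finset.mem_range.mpr (by assumption))
  have hsum : Phi Pf i0 s' - Phi Pf i0 s
      = ∑ x ∈ ({lIdx n k0, k0} : Finset ℕ), (contrib Pf i0 x s' - contrib Pf i0 x s) := by
    rw [Phi, Phi, ← Finset.sum_sub_distrib]
    exact (Finset.sum_subset hpairsub hDzero).symm
  have hpair : Phi Pf i0 s' - Phi Pf i0 s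
      = (contrib Pf i0 (lIdx n k0) s' - contrib Pf i0 (lIdx n k0) s)
        + (contrib Pf i0 k0 s' - contrib Pf i0 k0 s) := by
    rw [hsum, Finset.sum_pair hLne]
  have c1 : contrib Pf i0 k0 s' - contrib Pf i0 k0 s
      = theta Pf i0 k0 * (bi (!(s j)) - bi (s j))
        - g Pf i0 k0 * (bi (!(s j)) - bi (s j)) * bi (s (j+1)) := by
    rw [contrib, contrib, hnodek0, hnodek0succ, hupj, hup1]
    ring
  have c2 : contrib Pf i0 (lIdx n k0) s' - contrib Pf i0 (lIdx n k0) s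
      = - (g Pf i0 (lIdx n k0) * bi (s (j-1)) * (bi (!(s j)) - bi (s j))) := by
    rw [contrib, contrib, hnodeL_eq, hnlg, hupj, hupm]
    ring
  have hPhiDiff : Phi Pf i0 s' - Phi Pf i0 s
      = (bi (!(s j)) - bi (s j)) *
        (theta Pf i0 k0 - g Pf i0 (lIdx n k0) * bi (s (j-1)) - g Pf i0 k0 * bi (s (j+1))) := by
    rw [hpair, c1, c2]
    ring
  have hkey := key (i0 := i0) hmx hmz hc hk0lt (s (j-1)) (s (j+1))
  rw [hnodek0] at hkey
  cases hy : s j with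
  | false =>
      have hP : Pf j (s (j-1)) (s (j+1)) = true := by
        cases hv : Pf j (s (j-1)) (s (j+1))
        · rw [hy, hv] at hne; exact absurd rfl hne
        · rfl
      have := hkey.1 hP
      rw [hy] at hPhiDiff
      simp only [Bool.not_false, bi_true, bi_false] at hPhiDiff
      linarith
  | true =>
      have hP : Pf j (s (j-1)) (s (j+1)) = false := by
        cases hv : Pf j (s (j-1)) (s (j+1))
        · rfl
        · rw [hy, hv] at hne; exact absurd rfl hne
      have := hkey.2 hP
      rw [hy] at hPhiDiff
      simp only [Bool.not_true, bi_true, bi_false] at hPhiDiff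
      linarith

/-! ### bounds on the potential -/

lemma contrib_bounds (k : ℕ) (s : Fin n → Bool) :
    min 0 (theta Pf i0 k - g Pf i0 k) ≤ contrib Pf i0 k s ∧
    contrib Pf i0 k s ≤ max (theta Pf i0 k) 0 := by
  rw [contrib]
  cases h1 : s (node i0 k) <;> cases h2 : s (node i0 (k+1)) <;>
    simp only [bi_true, bi_false, mul_one, mul_zero, zero_mul, sub_zero] <;>
    constructor <;>
    linarith [min_le_left (0:ℤ) (theta Pf i0 k - g Pf i0 k),
      min_le_right (0:ℤ) (theta Pf i0 k - g Pf i0 k),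
      le_max_left (theta Pf i0 k) (0:ℤ), le_max_right (theta Pf i0 k) (0:ℤ),
      g_ge_two Pf i0 k]

lemma aRun_lIdx_succ {k : ℕ} (hk : k < n) (hA : ¬ isA Pf (node i0 k)) :
    aRun Pf i0 (lIdx n k + 1) = 0 := by
  rcases Nat.eq_zero_or_pos k with h0 | hpos
  · subst h0
    unfold lIdx
    rw [if_pos rfl]
    have : n - 1 + 1 = n := by omega
    rw [this]
    exact aRun_n Pf i0
  · unfold lIdx
    rw [if_neg (by omega)]
    have : k - 1 + 1 = k := by omega
    rw [this]
    exact aRun_zero Pf i0 hk hA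

lemma spread_le (hmx : ∀ j z, Pf j false z = true → Pf j true z = true)
    (hmz : ∀ j x, Pf j x false = true → Pf j x true = true)
    (hc : ∀ x z, Pf i0 x z = c) {k : ℕ} (hk : k < n) :
    max (theta Pf i0 k) 0 - min 0 (theta Pf i0 k - g Pf i0 k)
      ≤ 5 + 2 * (aRun Pf i0 (k+1) : ℤ) + 2 * (bRun Pf i0 (lIdx n k) : ℤ) := by
  have G2l := g_ge_two Pf i0 (lIdx n k)
  have G2 := g_ge_two Pf i0 k
  have hbL : (0:ℤ) ≤ (bRun Pf i0 (lIdx n k) : ℤ) := Int.natCast_nonneg _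
  have haK : (0:ℤ) ≤ (aRun Pf i0 (k+1) : ℤ) := Int.natCast_nonneg _
  by_cases h00 : Pf (node i0 k) false false = true
  · -- constant true
    have hnB : ¬ isB Pf (node i0 k) := by
      rintro ⟨_, h2⟩
      have := hmx _ _ h00
      rw [h2] at this
      exact Bool.noConfusion this
    have hb0 : bRun Pf i0 k = 0 := bRun_zero Pf i0 hnB
    rw [theta, if_pos h00]
    have hmax : max (-1 : ℤ) 0 = 0 := by simp
    have hmin : min (0:ℤ) (-1 - g Pf i0 k) = -1 - g Pf i0 k := min_eq_right (by linarith)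
    rw [hmax, hmin]
    rw [g, hb0]
    push_cast
    linarith
  · by_cases h11 : Pf (node i0 k) true true = false
    · -- constant false
      have hnA : ¬ isA Pf (node i0 k) := by
        rintro ⟨h1, _⟩
        have := hmz _ _ h1
        rw [h11] at this
        exact Bool.noConfusion this
      have hnB : ¬ isB Pf (node i0 k) := by
        rintro ⟨h1, _⟩
        have := hmx _ _ h1
        rw [h11] at this
        exact Bool.noConfusion this
      have hb0 : bRun Pf i0 k = 0 := bRun_zero Pf i0 hnB
      have ha0 : aRun Pf i0 (lIdx n k + 1) = 0 := aRun_lIdx_succ (Pf := Pf) (i0 := i0) hk hnA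
      rw [theta, if_neg h00, if_pos h11]
      have hmax : max (1 + g Pf i0 (lIdx n k) + g Pf i0 k) 0
          = 1 + g Pf i0 (lIdx n k) + g Pf i0 k := max_eq_left (by linarith)
      have hmin : min (0:ℤ) (1 + g Pf i0 (lIdx n k) + g Pf i0 k - g Pf i0 k) = 0 :=
        min_eq_left (by linarith)
      rw [hmax, hmin]
      have egl : g Pf i0 (lIdx n k) = 2 + 2 * (bRun Pf i0 (lIdx n k) : ℤ) := by
        rw [g, ha0]; push_cast; ring
      have egk : g Pf i0 k = 2 + 2 * (aRun Pf i0 (k+1) : ℤ) := by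
        rw [g, hb0]; push_cast; ring
      rw [egl, egk]
      linarith
    · by_cases hA : isA Pf (node i0 k)
      · have hb0 : bRun Pf i0 k = 0 := bRun_zero Pf i0 (isA_not_isB hA)
        rw [theta, if_neg h00, if_neg h11, if_pos hA]
        have hmax : max (1 + g Pf i0 k) 0 = 1 + g Pf i0 k := max_eq_left (by linarith)
        have hmin : min (0:ℤ) (1 + g Pf i0 k - g Pf i0 k) = 0 := min_eq_left (by linarith)
        rw [hmax, hmin]
        rw [g, hb0]
        push_cast
        linarith
      · by_cases hB : isB Pf (node i0 k)
        · have hKK := gK3 hc hk hB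
          have hk0 : k ≠ 0 := isB_ne_zero hc hk hB
          have hbS : bRun Pf i0 k = 1 + bRun Pf i0 (k-1) := bRun_succ Pf i0 hk0 hB
          have hL : lIdx n k = k - 1 := by unfold lIdx; rw [if_neg hk0]
          rw [theta, if_neg h00, if_neg h11, if_neg hA, if_pos hB]
          have hmax : max (1 + g Pf i0 (lIdx n k)) 0 = 1 + g Pf i0 (lIdx n k) :=
            max_eq_left (by linarith)
          have hmin : min (0:ℤ) (1 + g Pf i0 (lIdx n k) - g Pf i0 k)
              = 1 + g Pf i0 (lIdx n k) - g Pf i0 k := min_eq_right (by linarith)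
          rw [hmax, hmin]
          have : g Pf i0 k = 2 + 2 * (aRun Pf i0 (k+1) : ℤ) + 2 * (1 + (bRun Pf i0 (lIdx n k) : ℤ)) := by
            rw [g, hbS, hL]; push_cast; ring
          linarith
        · by_cases h01 : Pf (node i0 k) false true = true
          · -- or
            have h10 : Pf (node i0 k) true false = true := by
              cases h10' : Pf (node i0 k) true false
              · exact absurd ⟨h01, h10'⟩ hB
              · rfl
            have hnB : ¬ isB Pf (node i0 k) := hB
            have hb0 : bRun Pf i0 k = 0 := bRun_zero Pf i0 hnB
            rw [theta, if_neg h00, if_neg h11, if_neg hA, if_neg hB, if_pos h01]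
            have hmax : max (1:ℤ) 0 = 1 := max_eq_left (by linarith)
            have hmin : min (0:ℤ) (1 - g Pf i0 k) = 1 - g Pf i0 k := min_eq_right (by linarith)
            rw [hmax, hmin]
            rw [g, hb0]
            push_cast
            linarith
          · -- and
            have ha0 : aRun Pf i0 (lIdx n k + 1) = 0 := aRun_lIdx_succ (Pf := Pf) (i0 := i0) hk hA
            have hb0 : bRun Pf i0 k = 0 := bRun_zero Pf i0 hB
            rw [theta, if_neg h00, if_neg h11, if_neg hA, if_neg hB, if_neg h01]
            have egl : g Pf i0 (lIdx n k) = 2 + 2 * (bRun Pf i0 (lIdx n k) : ℤ) := by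
              rw [g, ha0]; push_cast; ring
            have egk : g Pf i0 k = 2 + 2 * (aRun Pf i0 (k+1) : ℤ) := by
              rw [g, hb0]; push_cast; ring
            have hmaxle : max (g Pf i0 (lIdx n k)) (g Pf i0 k)
                ≤ g Pf i0 (lIdx n k) + g Pf i0 k - 2 :=
              max_le (by linarith) (by linarith)
            have hmax : max (1 + max (g Pf i0 (lIdx n k)) (g Pf i0 k)) 0
                = 1 + max (g Pf i0 (lIdx n k)) (g Pf i0 k) :=
              max_eq_left (by positivity)
            have hmin : min (0:ℤ) (1 + max (g Pf i0 (lIdx n k)) (g Pf i0 k) - g Pf i0 k) = 0 :=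
              min_eq_left (by linarith [le_max_right (g Pf i0 (lIdx n k)) (g Pf i0 k)])
            rw [hmax, hmin, egl, egk]
            rw [egl, egk] at hmaxle
            linarith

lemma sum_spread (hn : 2 ≤ n)
    (hmx : ∀ j z, Pf j false z = true → Pf j true z = true)
    (hmz : ∀ j x, Pf j x false = true → Pf j x true = true)
    (hc : ∀ x z, Pf i0 x z = c) :
    ∑ k ∈ Finset.range n, (max (theta Pf i0 k) 0 - min 0 (theta Pf i0 k - g Pf i0 k))
      ≤ ((4 * n^2 : ℕ) : ℤ) := by
  have step1 : ∑ k ∈ Finset.range n, (max (theta Pf i0 k) 0 - min 0 (theta Pf i0 k - g Pf i0 k))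
      ≤ ∑ k ∈ Finset.range n, ((5 + 2 * aRun Pf i0 (k+1) + 2 * bRun Pf i0 (lIdx n k) : ℕ) : ℤ) := by
    apply Finset.sum_le_sum
    intro k hk
    have := spread_le (i0 := i0) hmx hmz hc (Finset.mem_range.mp hk)
    push_cast
    linarith
  have step2 : ∑ k ∈ Finset.range n, ((5 + 2 * aRun Pf i0 (k+1) + 2 * bRun Pf i0 (lIdx n k) : ℕ) : ℤ)
      = ((∑ k ∈ Finset.range n, (5 + 2 * aRun Pf i0 (k+1) + 2 * bRun Pf i0 (lIdx n k)) : ℕ) : ℤ) := by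
    push_cast
    rfl
  have hA : ∑ k ∈ Finset.range n, aRun Pf i0 (k+1) ≤ ∑ k ∈ Finset.range n, (n - 1 - k) := by
    apply Finset.sum_le_sum
    intro k hk
    have h1 := aRun_le Pf i0 (k+1)
    have h2 := Finset.mem_range.mp hk
    omega
  have hrefl : ∑ k ∈ Finset.range n, (n - 1 - k) = ∑ k ∈ Finset.range n, k :=
    Finset.sum_range_reflect (fun i => i) n
  have hgauss : (∑ k ∈ Finset.range n, k) * 2 = n * (n - 1) :=
    Finset.sum_range_id_mul_two n
  have hB : ∑ k ∈ Finset.range n, bRun Pf i0 (lIdx n k) ≤ n * (n - 1) := by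
    calc ∑ k ∈ Finset.range n, bRun Pf i0 (lIdx n k)
        ≤ ∑ _k ∈ Finset.range n, (n - 1) := by
          apply Finset.sum_le_sum
          intro k hk
          have hkn := Finset.mem_range.mp hk
          have h1 := bRun_le Pf i0 (lIdx n k)
          have h2 : lIdx n k ≤ n - 1 := by unfold lIdx; split <;> omega
          omega
      _ = n * (n-1) := by rw [Finset.sum_const, Finset.card_range, smul_eq_mul]
  have hnat : (∑ k ∈ Finset.range n, (5 + 2 * aRun Pf i0 (k+1) + 2 * bRun Pf i0 (lIdx n k)))
      ≤ 4 * n^2 := by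
    have hsplit : (∑ k ∈ Finset.range n, (5 + 2 * aRun Pf i0 (k+1) + 2 * bRun Pf i0 (lIdx n k)))
        = 5 * n + 2 * (∑ k ∈ Finset.range n, aRun Pf i0 (k+1))
          + 2 * (∑ k ∈ Finset.range n, bRun Pf i0 (lIdx n k)) := by
      rw [Finset.sum_add_distrib, Finset.sum_add_distrib, ← Finset.mul_sum, ← Finset.mul_sum,
        Finset.sum_const, Finset.card_range, smul_eq_mul, Nat.mul_comm]
    rw [hsplit]
    have h2A : 2 * (∑ k ∈ Finset.range n, aRun Pf i0 (k+1)) ≤ n * (n-1) := by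
      have := hA
      omega
    obtain ⟨m, rfl⟩ : ∃ m, n = m + 2 := ⟨n - 2, by omega⟩
    have e1 : m + 2 - 1 = m + 1 := rfl
    rw [e1] at h2A hB
    nlinarith [h2A, hB, sq_nonneg m]
  calc ∑ k ∈ Finset.range n, (max (theta Pf i0 k) 0 - min 0 (theta Pf i0 k - g Pf i0 k))
      ≤ _ := step1
    _ = _ := step2
    _ ≤ ((4 * n^2 : ℕ) : ℤ) := by exact_mod_cast hnat

lemma phi_range (hmx : ∀ j z, Pf j false z = true → Pf j true z = true)
    (hmz : ∀ j x, Pf j x false = true → Pf j x true = true)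
    (hc : ∀ x z, Pf i0 x z = c) (hn : 2 ≤ n) (s s' : Fin n → Bool) :
    Phi Pf i0 s - Phi Pf i0 s' ≤ ((4 * n^2 : ℕ) : ℤ) := by
  have h1 : Phi Pf i0 s - Phi Pf i0 s'
      = ∑ k ∈ Finset.range n, (contrib Pf i0 k s - contrib Pf i0 k s') := by
    rw [Phi, Phi, ← Finset.sum_sub_distrib]
  rw [h1]
  calc ∑ k ∈ Finset.range n, (contrib Pf i0 k s - contrib Pf i0 k s')
      ≤ ∑ k ∈ Finset.range n, (max (theta Pf i0 k) 0 - min 0 (theta Pf i0 k - g Pf i0 k)) := by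
        apply Finset.sum_le_sum
        intro k hk
        have hb1 := (contrib_bounds (Pf := Pf) (i0 := i0) k s).2
        have hb2 := (contrib_bounds (Pf := Pf) (i0 := i0) k s').1
        linarith
    _ ≤ _ := sum_spread (i0 := i0) hn hmx hmz hc

end CircleProof


namespace CircleProof

variable {n : ℕ} [NeZero n]

/-- The "preference" function of player `j`: `Pof G j x z = true` iff, when the left
neighbour plays `x` and the right neighbour plays `z`, player `j` strictly prefers its
1-strategy. -/
def Pof (G : CircleGame n) : Fin n → Bool → Bool → Bool :=
  fun j x z => decide (G.d1 j (1 + (!z).toNat) < G.d0 j (1 + x.toNat))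

lemma Pof_monoX (G : CircleGame n) :
    ∀ j z, Pof G j false z = true → Pof G j true z = true := by
  intro j z hj
  simp only [Pof, decide_eq_true_eq] at hj ⊢
  have h2 : G.d0 j (1+0) < G.d0 j (1+1) := G.mono0 j (by norm_num)
  simp only [Bool.toNat_false, Bool.toNat_true] at hj ⊢
  omega

lemma Pof_monoZ (G : CircleGame n) :
    ∀ j x, Pof G j x false = true → Pof G j x true = true := by
  intro j x hj
  simp only [Pof, decide_eq_true_eq] at hj ⊢
  have h2 : G.d1 j (1+0) < G.d1 j (1+1) := G.mono1 j (by norm_num)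
  simp only [Bool.not_false, Bool.not_true, Bool.toNat_false, Bool.toNat_true] at hj ⊢
  omega

lemma Pof_const (G : CircleGame n) {i : Fin n} (hty : G.IsType1 i ∨ G.IsType1' i) :
    ∃ c, ∀ x z, Pof G i x z = c := by
  rcases hty with h1 | h1
  · refine ⟨false, fun x z => ?_⟩
    apply decide_eq_false
    have ha : G.d0 i (1 + x.toNat) ≤ G.d0 i 2 :=
      (G.mono0 i).monotone (by cases x <;> simp)
    have hb : G.d1 i 1 ≤ G.d1 i (1 + (!z).toNat) :=
      (G.mono1 i).monotone (by cases z <;> simp)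
    have h2 := h1.2.1
    omega
  · refine ⟨true, fun x z => ?_⟩
    apply decide_eq_true
    have ha : G.d0 i 1 ≤ G.d0 i (1 + x.toNat) :=
      (G.mono0 i).monotone (by cases x <;> simp)
    have hb : G.d1 i (1 + (!z).toNat) ≤ G.d1 i 2 :=
      (G.mono1 i).monotone (by cases z <;> simp)
    have h2 := h1.2.1
    omega

lemma step_flip (G : CircleGame n) {s s' : Fin n → Bool} (hstep : G.Step s s') :
    ∃ j, s' = Function.update s j (!(s j)) ∧ s j ≠ Pof G j (s (j-1)) (s (j+1)) := by
  obtain ⟨i, hbr, hupd⟩ := hstep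
  refine ⟨i, hupd, ?_⟩
  have hsub : i + 1 - 1 = i := add_sub_cancel_right i 1
  rw [CircleGame.CurrentBR] at hbr
  cases hsi : s i with
  | false =>
      rw [hsi] at hbr
      rw [if_pos rfl] at hbr
      push_neg at hbr
      have hci : CircleGame.cong s i = 1 + (s (i-1)).toNat := by
        rw [CircleGame.cong, if_pos hsi]
        congr 1
        cases hv : s (i-1) <;> simp [hv]
      have hci1 : CircleGame.cong s (i+1) = (!(s (i+1))).toNat := by
        rw [CircleGame.cong, hsub, hsi]
        cases hv : s (i+1) <;> simp [hv]
      rw [hci, hci1] at hbr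
      intro hcon
      have hfalse := of_decide_eq_false (Eq.symm hcon)
      apply hfalse
      rw [Nat.add_comm] at hbr
      exact hbr
  | true =>
      rw [hsi] at hbr
      rw [if_neg (by simp)] at hbr
      push_neg at hbr
      have hci : CircleGame.cong s i = (s (i-1)).toNat := by
        rw [CircleGame.cong, if_neg (by rw [hsi]; simp)]
        have : (if s (i-1) = true then 1 else 0) = (s (i-1)).toNat := by
          cases hv : s (i-1) <;> simp [hv]
        omega
      have hci1 : CircleGame.cong s (i+1) = (!(s (i+1))).toNat + 1 := by
        rw [CircleGame.cong, hsub, hsi]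
        cases hv : s (i+1) <;> simp [hv]
      rw [hci, hci1] at hbr
      intro hcon
      have htrue := of_decide_eq_true (Eq.symm hcon)
      rw [Nat.add_comm ((s (i-1)).toNat) 1] at hbr
      rw [Nat.add_comm ((!(s (i+1))).toNat) 1] at hbr
      exact absurd htrue (lt_asymm hbr)

end CircleProof

/-- If in a player-specific congestion game on a circle at least one player
is of type 1 or of type 1', then the transition graph is acyclic and every best response
schedule terminates after at most `4n^2` steps. -/
theorem circle_type1_acyclic_and_terminates
    (n : ℕ) [NeZero n] (G : CircleGame n)
    (h : ∃ i, G.IsType1 i ∨ G.IsType1' i) :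
    (∀ s : Fin n → Bool, ¬ Relation.TransGen G.Step s s) ∧
    (∀ (L : ℕ) (f : ℕ → Fin n → Bool),
      (∀ k, k < L → G.Step (f k) (f (k + 1))) → L ≤ 4 * n ^ 2) := by
  classical
  obtain ⟨i0, hty⟩ := h
  by_cases hn1 : n = 1
  · -- single player : after one step the state is stable, so no long schedules
    subst hn1
    have hadd : ∀ j : Fin 1, j = 0 := fun j => Subsingleton.elim _ _
    have hi0 : i0 = 0 := hadd i0
    subst hi0
    have hcong : ∀ (s : Fin 1 → Bool) (r : Fin 1), CircleGame.cong s r = 1 := by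
      intro s r
      rw [hadd r, CircleGame.cong]
      have h01 : (0 - 1 : Fin 1) = 0 := hadd _
      rw [h01]
      cases hv : s 0 <;> simp [hv]
    have hmain : (∀ u : Fin 1 → Bool, u 0 = false → G.CurrentBR u 0) ∨
        (∀ u : Fin 1 → Bool, u 0 = true → G.CurrentBR u 0) := by
      rcases hty with h1 | h1
      · left
        intro u hu
        rw [CircleGame.CurrentBR, if_pos hu, hcong u 0, hcong u (0+1)]
        have a1 := h1.1
        have a2 := h1.2.1
        have a3 := h1.2.2
        norm_num
        omega
      · right
        intro u hu
        rw [CircleGame.CurrentBR, if_neg (by rw [hu]; simp), hcong u 0, hcong u (0+1)]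
        have a1 := h1.1
        have a2 := h1.2.1
        have a3 := h1.2.2
        norm_num
        omega
    obtain ⟨v, hgood⟩ : ∃ v : Bool, ∀ u : Fin 1 → Bool, u 0 = v → G.CurrentBR u 0 := by
      rcases hmain with hm | hm
      · exact ⟨false, hm⟩
      · exact ⟨true, hm⟩
    have hnostep : ∀ u z : Fin 1 → Bool, G.Step u z → z 0 = v := by
      intro u z hstep
      obtain ⟨i, hbr, hupd⟩ := hstep
      rw [hadd i] at hbr hupd
      have hu0 : u 0 = !v := by
        cases hv : u 0
        · cases hw : v
          · exact absurd (hgood u (by rw [hv, hw])) hbr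
          · rfl
        · cases hw : v
          · rfl
          · exact absurd (hgood u (by rw [hv, hw])) hbr
      rw [hupd]
      simp [hu0]
    have hfirst : ∀ a c : Fin 1 → Bool, Relation.TransGen G.Step a c → ∃ b, G.Step a b := by
      intro a c hac
      induction hac with
      | single h1 => exact ⟨_, h1⟩
      | tail _ _ ih => exact ih
    have hlast : ∀ a c : Fin 1 → Bool, Relation.TransGen G.Step a c → c 0 = v := by
      intro a c hac
      induction hac with
      | single h1 => exact hnostep _ _ h1
      | tail _ h1 _ => exact hnostep _ _ h1
    constructor
    · intro s hs
      obtain ⟨b, hb⟩ := hfirst s s hs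
      have hs0 : s 0 = v := hlast s s hs
      obtain ⟨i, hbr, _⟩ := hb
      rw [hadd i] at hbr
      exact hbr (hgood s hs0)
    · intro L f hf
      by_contra hL
      push_neg at hL
      have h0 := hf 0 (by omega)
      have h1f := hf 1 (by omega)
      have hz : f 1 0 = v := hnostep _ _ h0
      obtain ⟨i, hbr, _⟩ := h1f
      rw [hadd i] at hbr
      exact hbr (hgood (f 1) hz)
  · -- at least two players : use the potential function
    have hn : 2 ≤ n := by
      have := NeZero.pos n
      omega
    have hmx := CircleProof.Pof_monoX G
    have hmz := CircleProof.Pof_monoZ G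
    obtain ⟨c, hc⟩ := CircleProof.Pof_const G hty
    have hdec : ∀ s s', G.Step s s' →
        CircleProof.Phi (CircleProof.Pof G) i0 s' + 1 ≤ CircleProof.Phi (CircleProof.Pof G) i0 s := by
      intro s s' hstep
      obtain ⟨j, hupd, hne⟩ := CircleProof.step_flip G hstep
      rw [hupd]
      exact CircleProof.flip_decrease hn hmx hmz hc s j hne
    constructor
    · intro s hs
      have hlt : ∀ a b, Relation.TransGen G.Step a b →
          CircleProof.Phi (CircleProof.Pof G) i0 b < CircleProof.Phi (CircleProof.Pof G) i0 a := by
        intro a b hab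
        induction hab with
        | single h1 => have := hdec _ _ h1; linarith
        | tail _ h1 ih => have := hdec _ _ h1; linarith
      exact absurd (hlt s s hs) (lt_irrefl _)
    · intro L f hf
      have hmono : ∀ m, m ≤ L →
          CircleProof.Phi (CircleProof.Pof G) i0 (f m) + (m : ℤ)
            ≤ CircleProof.Phi (CircleProof.Pof G) i0 (f 0) := by
        intro m
        induction m with
        | zero => intro _; simp
        | succ m ih =>
            intro hm
            have h1 := hdec _ _ (hf m (by omega))
            have h2 := ih (by omega)
            push_cast
            push_cast at h2
            linarith
      have hR := CircleProof.phi_range hmx hmz hc hn (f 0) (f L)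
      have hM := hmono L le_rfl
      have hfin : (L : ℤ) ≤ ((4 * n^2 : ℕ) : ℤ) := by linarith
      exact_mod_cast hfin
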